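/- If a linear map G : V → V on a finite-dimensional inner product space V = Ω × T (with Ω, T subspaces of S^{p×p} satisfying Ω ∩ T = {0}) is defined by G(S, L) = (P_Ω(I(S+L)), P_T(I(S+L))) where I : S^{p×p} → S^{p×p} is a positive definite self-adjoint linear operator, then G is invertible. -/
import Mathlib


/-- trace inner product. -/
def inn {n m : Type*} [Fintype n] [Fintype m] (A B : Matrix n m ℝ) : ℝ :=
  ∑ i, ∑ j, A i j * B i j

lemma inn_add_right {n m : Type*} [Fintype n] [Fintype m] (A B C : Matrix n m ℝ) :
    inn A (B + C) = inn A B + inn A C := by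
  simp [inn, mul_add, Finset.sum_add_distrib]

lemma inn_sub_left {n m : Type*} [Fintype n] [Fintype m] (A B C : Matrix n m ℝ) :
    inn (A - B) C = inn A C - inn B C := by
  simp [inn, sub_mul, Finset.sum_sub_distrib]

lemma inn_comm {n m : Type*} [Fintype n] [Fintype m] (A B : Matrix n m ℝ) :
    inn A B = inn B A := by
  simp [inn, mul_comm]

lemma inn_zero_left {n m : Type*} [Fintype n] [Fintype m] (B : Matrix n m ℝ) :
    inn 0 B = 0 := by simp [inn]

/-- invertibility of the operator `G(S, L) = (P_Ω(I(S+L)), P_T(I(S+L)))` on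
`Ω × T`, where `Ω, T` are subspaces of symmetric matrices with `Ω ∩ T = {0}`, `P_Ω, P_T`
are the orthogonal projections (w.r.t. the trace inner product), and `I` is a positive
definite self-adjoint linear operator on matrices. -/
theorem stmt_19 (p : ℕ) (Ω T : Submodule ℝ (Matrix (Fin p) (Fin p) ℝ))
    (hsymΩ : ∀ A ∈ Ω, A.IsSymm) (hsymT : ∀ A ∈ T, A.IsSymm)
    (htriv : Ω ⊓ T = ⊥)
    (PΩ PT I : Matrix (Fin p) (Fin p) ℝ →ₗ[ℝ] Matrix (Fin p) (Fin p) ℝ)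
    (hPΩmem : ∀ A, PΩ A ∈ Ω) (hPΩid : ∀ A ∈ Ω, PΩ A = A)
    (hPΩorth : ∀ A, ∀ B ∈ Ω, inn (A - PΩ A) B = 0)
    (hPTmem : ∀ A, PT A ∈ T) (hPTid : ∀ A ∈ T, PT A = A)
    (hPTorth : ∀ A, ∀ B ∈ T, inn (A - PT A) B = 0)
    (hIsa : ∀ A B, inn (I A) B = inn A (I B))
    (hIpd : ∀ M : Matrix (Fin p) (Fin p) ℝ, M ≠ 0 → 0 < inn M (I M)) :
    Function.Bijective (fun SL : Ω × T =>
      ((⟨PΩ (I ((SL.1 : Matrix (Fin p) (Fin p) ℝ) + (SL.2 : Matrix (Fin p) (Fin p) ℝ))),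
          hPΩmem _⟩ : Ω),
       (⟨PT (I ((SL.1 : Matrix (Fin p) (Fin p) ℝ) + (SL.2 : Matrix (Fin p) (Fin p) ℝ))),
          hPTmem _⟩ : T))) := by
  set f : Ω × T →ₗ[ℝ] Ω × T :=
    { toFun := fun SL =>
        ((⟨PΩ (I ((SL.1 : Matrix (Fin p) (Fin p) ℝ) + (SL.2 : Matrix (Fin p) (Fin p) ℝ))),
            hPΩmem _⟩ : Ω),
         (⟨PT (I ((SL.1 : Matrix (Fin p) (Fin p) ℝ) + (SL.2 : Matrix (Fin p) (Fin p) ℝ))),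
            hPTmem _⟩ : T))
      map_add' := by
        intro x y
        refine Prod.ext (Subtype.ext ?_) (Subtype.ext ?_) <;>
        · simp only [Prod.fst_add, Prod.snd_add, Submodule.coe_add]
          rw [show ((x.1 : Matrix (Fin p) (Fin p) ℝ) + y.1) + ((x.2 : Matrix (Fin p) (Fin p) ℝ) + y.2)
              = ((x.1 : Matrix (Fin p) (Fin p) ℝ) + x.2) + ((y.1 : Matrix (Fin p) (Fin p) ℝ) + y.2) by abel]
          rw [map_add, map_add]
      map_smul' := by
        intro c x
        refine Prod.ext (Subtype.ext ?_) (Subtype.ext ?_) <;>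
        · simp only [Prod.smul_fst, Prod.smul_snd, SetLike.val_smul, RingHom.id_apply]
          rw [← smul_add, map_smul, map_smul] } with hf
  have hinj : Function.Injective f := by
    rw [injective_iff_map_eq_zero]
    rintro ⟨⟨S, hS⟩, ⟨L, hL⟩⟩ h
    have h1 : PΩ (I (S + L)) = 0 := congrArg Subtype.val (congrArg Prod.fst h)
    have h2 : PT (I (S + L)) = 0 := congrArg Subtype.val (congrArg Prod.snd h)
    have hSL : S + L = 0 := by
      by_contra hne
      have hpos := hIpd _ hne
      have e1 : inn (I (S + L)) S = 0 := by
        have := hPΩorth (I (S + L)) S hS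
        rwa [inn_sub_left, h1, inn_zero_left, sub_zero] at this
      have e2 : inn (I (S + L)) L = 0 := by
        have := hPTorth (I (S + L)) L hL
        rwa [inn_sub_left, h2, inn_zero_left, sub_zero] at this
      have : inn (S + L) (I (S + L)) = 0 := by
        rw [inn_comm, inn_add_right, e1, e2, add_zero]
      linarith
    have hSmem : S ∈ Ω ⊓ T := by
      refine ⟨hS, ?_⟩
      have : S = -L := eq_neg_of_add_eq_zero_left hSL
      rw [this]; exact neg_mem hL
    rw [htriv] at hSmem
    have hS0 : S = 0 := hSmem
    have hL0 : L = 0 := by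
      have := hSL; rw [hS0, zero_add] at this; exact this
    refine Prod.ext (Subtype.ext hS0) (Subtype.ext hL0)
  have hsurj : Function.Surjective f := by
    exact (LinearMap.injective_iff_surjective).mp hinj
  exact ⟨hinj, hsurj⟩
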